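/- arXiv:2005.07410 — 2 statements merged into one kernel-verified Lean document; each statement's English description precedes it below -/
import Mathlib

section
/- Alzer's inequality: for every real m > 1 and every z > 0, γ(m, z)/Γ(m) > (1 − exp(−c z))^m, where c = (Γ(m+1))^{−1/m} and γ(m,z) = ∫₀^z t^{m−1} e^{−t} dt is the lower incomplete Gamma function. -/
open Real MeasureTheory Set Filter Topology

noncomputable def Lfun (t : ℝ) : ℝ := Real.log (1 - Real.exp (-t)) - Real.log t

lemma Lfun_zero : Lfun 0 = 0 := by simp [Lfun]

lemma one_sub_exp_pos {t : ℝ} (ht : 0 < t) : 0 < 1 - Real.exp (-t) := by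
  have : Real.exp (-t) < 1 := by rw [Real.exp_lt_one_iff]; linarith
  linarith

lemma Lfun_hasDerivAt {t : ℝ} (ht : 0 < t) :
    HasDerivAt Lfun (Real.exp (-t) / (1 - Real.exp (-t)) - 1 / t) t := by
  have h1 := one_sub_exp_pos ht
  have hexp : HasDerivAt (fun s : ℝ => 1 - Real.exp (-s)) (Real.exp (-t)) t := by
    have h := ((Real.hasDerivAt_exp (-t)).comp t (hasDerivAt_neg t)).const_sub 1
    exact h.congr_deriv (by ring)
  have hlog1 : HasDerivAt (fun s : ℝ => Real.log (1 - Real.exp (-s)))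
      (Real.exp (-t) / (1 - Real.exp (-t))) t := hexp.log h1.ne'
  have hlog2 : HasDerivAt Real.log (1 / t) t := by
    simpa [one_div] using Real.hasDerivAt_log ht.ne'
  exact hlog1.sub hlog2

lemma Lderiv_hasDerivAt {t : ℝ} (ht : 0 < t) :
    HasDerivAt (fun s : ℝ => Real.exp (-s) / (1 - Real.exp (-s)) - 1 / s)
      (1 / t ^ 2 - Real.exp (-t) / (1 - Real.exp (-t)) ^ 2) t := by
  have h1 := one_sub_exp_pos ht
  have hexp : HasDerivAt (fun s : ℝ => Real.exp (-s)) (-Real.exp (-t)) t := by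
    have h := (Real.hasDerivAt_exp (-t)).comp t (hasDerivAt_neg t)
    exact h.congr_deriv (by ring)
  have hden : HasDerivAt (fun s : ℝ => 1 - Real.exp (-s)) (Real.exp (-t)) t := by
    have h := hexp.const_sub 1
    exact h.congr_deriv (by ring)
  have hdiv := hexp.div hden h1.ne'
  have hinv : HasDerivAt (fun s : ℝ => 1 / s) (-(1 / t ^ 2)) t := by
    have h := (hasDerivAt_inv ht.ne')
    simpa [one_div] using h
  have := hdiv.sub hinv
  exact this.congr_deriv (by field_simp; ring)

lemma Lfun_continuousOn : ContinuousOn Lfun (Ici 0) := by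
  intro t ht
  rcases eq_or_lt_of_le (mem_Ici.mp ht) with h0 | htpos
  · subst h0
    rw [← continuousWithinAt_Ioi_iff_Ici]
    have key : Tendsto (fun s : ℝ => (1 - Real.exp (-s)) / s) (𝓝[>] 0) (𝓝 1) := by
      have hd : HasDerivAt (fun s : ℝ => 1 - Real.exp (-s)) 1 0 := by
        have h := ((Real.hasDerivAt_exp (-0)).comp 0 (hasDerivAt_neg 0)).const_sub 1
        exact h.congr_deriv (by simp)
      rw [hasDerivAt_iff_tendsto_slope] at hd
      have hmono : 𝓝[>] (0:ℝ) ≤ 𝓝[≠] (0:ℝ) :=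
        nhdsWithin_mono 0 (fun x hx => ne_of_gt hx)
      have := hd.mono_left hmono
      refine this.congr' ?_
      filter_upwards [self_mem_nhdsWithin] with s hs
      simp [slope_def_field, Real.exp_zero]
    have hlog : Tendsto Lfun (𝓝[>] (0:ℝ)) (𝓝 0) := by
      have hcomp := (Real.continuousAt_log one_ne_zero).tendsto.comp key
      rw [Real.log_one] at hcomp
      refine hcomp.congr' ?_
      filter_upwards [self_mem_nhdsWithin] with s hs
      rw [Function.comp_apply, Real.log_div (one_sub_exp_pos hs).ne' (ne_of_gt hs)]
      rfl
    unfold ContinuousWithinAt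
    rw [Lfun_zero]
    exact hlog
  · exact (ContinuousAt.continuousWithinAt (by
      have h1 : ContinuousAt (fun s : ℝ => Real.log (1 - Real.exp (-s))) t := by
        have : ContinuousAt (fun s : ℝ => 1 - Real.exp (-s)) t := by fun_prop
        exact this.log (one_sub_exp_pos htpos).ne'
      exact h1.sub (Real.continuousAt_log htpos.ne')))

lemma Lfun_strictConvexOn : StrictConvexOn ℝ (Ici 0) Lfun := by
  apply strictConvexOn_of_deriv2_pos (convex_Ici 0) Lfun_continuousOn
  intro t ht
  rw [interior_Ici] at ht
  have ht' : 0 < t := ht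
  have hev : deriv Lfun =ᶠ[𝓝 t]
      (fun s : ℝ => Real.exp (-s) / (1 - Real.exp (-s)) - 1 / s) := by
    filter_upwards [Ioi_mem_nhds ht'] with u hu
    exact (Lfun_hasDerivAt hu).deriv
  have h2 : deriv^[2] Lfun t = 1 / t ^ 2 - Real.exp (-t) / (1 - Real.exp (-t)) ^ 2 := by
    show deriv (deriv Lfun) t = _
    rw [hev.deriv_eq, (Lderiv_hasDerivAt ht').deriv]
  rw [h2]
  have h1 := one_sub_exp_pos ht'
  have hsinh := Real.self_lt_sinh_iff.mpr (half_pos ht')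
  rw [Real.sinh_eq] at hsinh
  have he1 : Real.exp (t / 2) * Real.exp (-(t / 2)) = 1 := by
    rw [← Real.exp_add]; ring_nf; exact Real.exp_zero
  have he2 : Real.exp (-(t / 2)) * Real.exp (-(t / 2)) = Real.exp (-t) := by
    rw [← Real.exp_add]; ring_nf
  have hp : 0 < Real.exp (-(t / 2)) := Real.exp_pos _
  have hkey : t * Real.exp (-(t / 2)) < 1 - Real.exp (-t) := by nlinarith
  have h0k : 0 ≤ t * Real.exp (-(t / 2)) := by positivity
  have hsq : t ^ 2 * Real.exp (-t) < (1 - Real.exp (-t)) ^ 2 := by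
    calc t ^ 2 * Real.exp (-t) = (t * Real.exp (-(t / 2))) ^ 2 := by rw [← he2]; ring
    _ < (1 - Real.exp (-t)) ^ 2 := by exact pow_lt_pow_left₀ hkey h0k (by norm_num)
  have hlt : Real.exp (-t) / (1 - Real.exp (-t)) ^ 2 < 1 / t ^ 2 := by
    rw [div_lt_div_iff₀ (by positivity) (pow_pos ht' 2)]
    nlinarith
  linarith

lemma phi_lt {s t : ℝ} (hs : 0 < s) (hst : s < t) : Lfun s / s < Lfun t / t := by
  have ht : 0 < t := hs.trans hst
  have hslope := Lfun_strictConvexOn.slope_strict_mono_adjacent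
    (x := 0) (y := s) (z := t) (self_mem_Ici) (mem_Ici.mpr ht.le) hs hst
  rw [Lfun_zero, sub_zero, sub_zero] at hslope
  rw [div_lt_div_iff₀ hs (sub_pos.2 hst)] at hslope
  rw [div_lt_div_iff₀ hs ht]
  nlinarith

noncomputable def psiA (m b x : ℝ) : ℝ := Lfun (b * x) / x + (1 - b) / (m - 1)

noncomputable def Efun (m b x : ℝ) : ℝ :=
  m * (1 - Real.exp (-(b * x))) ^ (m - 1) * (b * Real.exp (-(b * x)))
    - x ^ (m - 1) * Real.exp (-x) / Real.Gamma m

lemma psiA_strictMono {m b : ℝ} (hb : 0 < b) {x₁ x₂ : ℝ} (h1 : 0 < x₁)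
    (h12 : x₁ < x₂) : psiA m b x₁ < psiA m b x₂ := by
  have h2 : 0 < x₂ := h1.trans h12
  have hphi := phi_lt (mul_pos hb h1) (mul_lt_mul_of_pos_left h12 hb)
  have e1 : Lfun (b * x₁) / x₁ = b * (Lfun (b * x₁) / (b * x₁)) := by
    field_simp
  have e2 : Lfun (b * x₂) / x₂ = b * (Lfun (b * x₂) / (b * x₂)) := by
    field_simp
  have : Lfun (b * x₁) / x₁ < Lfun (b * x₂) / x₂ := by
    rw [e1, e2]; exact mul_lt_mul_of_pos_left hphi hb
  simp only [psiA]
  linarith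

lemma sign_iff {m b x : ℝ} (hm : 1 < m) (hb : 0 < b) (hx : 0 < x)
    (hlogb : m * Real.log b = -(Real.log m + Real.log (Real.Gamma m))) :
    (Efun m b x < 0 ↔ psiA m b x < 0) ∧ (0 < Efun m b x ↔ 0 < psiA m b x) := by
  have hm0 : (0:ℝ) < m := by linarith
  have hm1 : (0:ℝ) < m - 1 := by linarith
  have hΓ : 0 < Real.Gamma m := Real.Gamma_pos_of_pos hm0
  have hbx : 0 < b * x := mul_pos hb hx
  have hA : 0 < 1 - Real.exp (-(b * x)) := one_sub_exp_pos hbx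
  set P := m * (1 - Real.exp (-(b * x))) ^ (m - 1) * (b * Real.exp (-(b * x))) with hPdef
  set Q := x ^ (m - 1) * Real.exp (-x) / Real.Gamma m with hQdef
  have hP : 0 < P := by
    apply mul_pos (mul_pos hm0 (Real.rpow_pos_of_pos hA _)) (mul_pos hb (Real.exp_pos _))
  have hQ : 0 < Q := div_pos (mul_pos (Real.rpow_pos_of_pos hx _) (Real.exp_pos _)) hΓ
  set R := (m - 1) * Lfun (b * x) + (1 - b) * x with hRdef
  have hlogP : Real.log P = Real.log m + (m - 1) * Real.log (1 - Real.exp (-(b * x)))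
      + (Real.log b + -(b * x)) := by
    rw [hPdef, Real.log_mul (mul_pos hm0 (Real.rpow_pos_of_pos hA _)).ne'
        (mul_pos hb (Real.exp_pos _)).ne',
      Real.log_mul hm0.ne' (Real.rpow_pos_of_pos hA _).ne', Real.log_rpow hA,
      Real.log_mul hb.ne' (Real.exp_pos _).ne', Real.log_exp]
  have hlogQ : Real.log Q = (m - 1) * Real.log x + -x - Real.log (Real.Gamma m) := by
    rw [hQdef, Real.log_div (mul_pos (Real.rpow_pos_of_pos hx _) (Real.exp_pos _)).ne' hΓ.ne',
      Real.log_mul (Real.rpow_pos_of_pos hx _).ne' (Real.exp_pos _).ne',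
      Real.log_rpow hx, Real.log_exp]
  have hLf : Lfun (b * x) = Real.log (1 - Real.exp (-(b * x))) - (Real.log b + Real.log x) := by
    rw [Lfun, Real.log_mul hb.ne' hx.ne']
  have hdiff : Real.log Q - Real.log P = -R := by
    rw [hlogQ, hlogP, hRdef, hLf]
    linear_combination -hlogb
  have hPQ : P < Q ↔ R < 0 := by
    rw [← Real.log_lt_log_iff hP hQ]
    constructor <;> intro h <;> linarith
  have hQP : Q < P ↔ 0 < R := by
    rw [← Real.log_lt_log_iff hQ hP]
    constructor <;> intro h <;> linarith
  have hpsiR : psiA m b x = R / ((m - 1) * x) := by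
    rw [psiA, hRdef]
    field_simp
  have hmx : 0 < (m - 1) * x := mul_pos hm1 hx
  have hpsi_neg : psiA m b x < 0 ↔ R < 0 := by
    rw [hpsiR, div_neg_iff]
    constructor
    · rintro (⟨h1, h2⟩ | ⟨h1, h2⟩)
      · linarith
      · exact h1
    · intro h; exact Or.inr ⟨h, hmx⟩
  have hpsi_pos : 0 < psiA m b x ↔ 0 < R := by
    rw [hpsiR, div_pos_iff]
    constructor
    · rintro (⟨h1, h2⟩ | ⟨h1, h2⟩)
      · exact h1
      · linarith
    · intro h; exact Or.inl ⟨h, hmx⟩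
  constructor
  · rw [Efun, ← hPdef, ← hQdef, sub_neg, hpsi_neg]; exact hPQ
  · rw [Efun, ← hPdef, ← hQdef, sub_pos, hpsi_pos]; exact hQP

/-- Alzer's inequality: for `m > 1`, `z > 0` and `c = Γ(m+1)^{−1/m}`,
`γ(m,z)/Γ(m) > (1 − e^{−cz})^m` where `γ` is the lower incomplete Gamma function. -/
theorem alzer_inequality (m z : ℝ) (hm : 1 < m) (hz : 0 < z) :
    (∫ t in (0:ℝ)..z, t ^ (m - 1) * Real.exp (-t)) / Real.Gamma m >
      (1 - Real.exp (-(Real.Gamma (m + 1) ^ (-(1 / m)) * z))) ^ m := by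
  have hm0 : (0:ℝ) < m := by linarith
  have hm1 : (0:ℝ) < m - 1 := by linarith
  have hΓ : 0 < Real.Gamma m := Real.Gamma_pos_of_pos hm0
  have hΓ1 : 0 < Real.Gamma (m + 1) := Real.Gamma_pos_of_pos (by linarith)
  set b : ℝ := Real.Gamma (m + 1) ^ (-(1 / m)) with hbdef
  have hb : 0 < b := Real.rpow_pos_of_pos hΓ1 _
  have hlogb : m * Real.log b = -(Real.log m + Real.log (Real.Gamma m)) := by
    rw [hbdef, Real.log_rpow hΓ1, Real.Gamma_add_one hm0.ne', Real.log_mul hm0.ne' hΓ.ne']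
    field_simp
  rw [gt_iff_lt, ← sub_neg]
  set f : ℝ → ℝ := fun y => (1 - Real.exp (-(b * y))) ^ m
      - (∫ t in (0:ℝ)..y, t ^ (m - 1) * Real.exp (-t)) / Real.Gamma m with hfdef
  show f z < 0
  -- basic analytic facts about f
  have hgc : Continuous (fun t : ℝ => t ^ (m - 1) * Real.exp (-t)) :=
    (Real.continuous_rpow_const (by linarith)).mul (Real.continuous_exp.comp continuous_neg)
  have hI : ∀ x : ℝ, HasDerivAt (fun y => ∫ t in (0:ℝ)..y, t ^ (m - 1) * Real.exp (-t))
      (x ^ (m - 1) * Real.exp (-x)) x := fun x =>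
    intervalIntegral.integral_hasDerivAt_right (hgc.intervalIntegrable 0 x)
      (hgc.stronglyMeasurableAtFilter _ _) hgc.continuousAt
  have hFd : ∀ x : ℝ, 0 < x → HasDerivAt (fun y : ℝ => (1 - Real.exp (-(b * y))) ^ m)
      (m * (1 - Real.exp (-(b * x))) ^ (m - 1) * (b * Real.exp (-(b * x)))) x := by
    intro x hx
    have hA : 0 < 1 - Real.exp (-(b * x)) := one_sub_exp_pos (mul_pos hb hx)
    have hinner : HasDerivAt (fun y : ℝ => 1 - Real.exp (-(b * y)))
        (b * Real.exp (-(b * x))) x := by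
      have h1 : HasDerivAt (fun y : ℝ => -(b * y)) (-b) x := by
        exact (((hasDerivAt_id x).const_mul b).neg).congr_deriv (by ring)
      have h2 := h1.exp.const_sub 1
      exact h2.congr_deriv (by ring)
    have houter := Real.hasDerivAt_rpow_const
      (x := 1 - Real.exp (-(b * x))) (p := m) (Or.inl hA.ne')
    have hcomp := HasDerivAt.comp x houter hinner
    exact hcomp
  have hfd : ∀ x : ℝ, 0 < x → HasDerivAt f (Efun m b x) x := by
    intro x hx
    have h := (hFd x hx).sub ((hI x).div_const (Real.Gamma m))
    rw [hfdef]
    simp only [Efun]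
    exact h
  have hderiv : ∀ x : ℝ, 0 < x → deriv f x = Efun m b x := fun x hx => (hfd x hx).deriv
  have hf0 : f 0 = 0 := by
    simp [hfdef, Real.zero_rpow hm0.ne', intervalIntegral.integral_same]
  have hcont : Continuous f := by
    have h1 : Continuous (fun y : ℝ => (1 - Real.exp (-(b * y))) ^ m) :=
      (Real.continuous_rpow_const hm0.le).comp (by fun_prop)
    have h2 : Continuous (fun y : ℝ => ∫ t in (0:ℝ)..y, t ^ (m - 1) * Real.exp (-t)) := by
      have hd : Differentiable ℝ (fun y : ℝ => ∫ t in (0:ℝ)..y, t ^ (m - 1) * Real.exp (-t)) :=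
        fun x => (hI x).differentiableAt
      exact hd.continuous
    rw [hfdef]
    exact h1.sub (h2.div_const _)
  have hInt : IntegrableOn (fun t : ℝ => t ^ (m - 1) * Real.exp (-t)) (Ioi 0) :=
    (Real.GammaIntegral_convergent hm0).congr_fun (fun x _ => mul_comm _ _) measurableSet_Ioi
  have hGammaInt : (∫ t in Ioi (0:ℝ), t ^ (m - 1) * Real.exp (-t)) = Real.Gamma m := by
    rw [Real.Gamma_eq_integral hm0]
    exact MeasureTheory.setIntegral_congr_fun measurableSet_Ioi (fun x _ => mul_comm _ _)
  have hlim : Tendsto f atTop (𝓝 0) := by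
    have hbz : Tendsto (fun y : ℝ => -(b * y)) atTop atBot :=
      tendsto_neg_atTop_atBot.comp (Tendsto.const_mul_atTop hb tendsto_id)
    have hexp : Tendsto (fun y : ℝ => Real.exp (-(b * y))) atTop (𝓝 0) :=
      Real.tendsto_exp_atBot.comp hbz
    have hbase : Tendsto (fun y : ℝ => 1 - Real.exp (-(b * y))) atTop (𝓝 1) := by
      simpa using tendsto_const_nhds.sub hexp
    have hout : ContinuousAt (fun u : ℝ => u ^ m) 1 :=
      Real.continuousAt_rpow_const 1 m (Or.inl one_ne_zero)
    have h1 : Tendsto (fun y : ℝ => (1 - Real.exp (-(b * y))) ^ m) atTop (𝓝 1) := by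
      have := hout.tendsto.comp hbase
      simpa [Real.one_rpow, Function.comp_def] using this
    have h2 : Tendsto (fun y : ℝ => (∫ t in (0:ℝ)..y, t ^ (m - 1) * Real.exp (-t))
        / Real.Gamma m) atTop (𝓝 1) := by
      have h3 := MeasureTheory.intervalIntegral_tendsto_integral_Ioi 0 hInt tendsto_id
      rw [hGammaInt] at h3
      have h4 := h3.div_const (Real.Gamma m)
      simpa [div_self hΓ.ne'] using h4
    have := h1.sub h2
    rw [hfdef]
    simpa using this
  -- the set where psi is negative
  by_cases hS : {x : ℝ | 0 < x ∧ psiA m b x < 0}.Nonempty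
  · by_cases hBdd : BddAbove {x : ℝ | 0 < x ∧ psiA m b x < 0}
    · -- main case
      obtain ⟨s₀, hs₀⟩ := hS
      set x₀ := sSup {x : ℝ | 0 < x ∧ psiA m b x < 0} with hx₀def
      have hx₀pos : 0 < x₀ := lt_of_lt_of_le hs₀.1 (le_csSup hBdd hs₀)
      have hneg : ∀ x : ℝ, 0 < x → x < x₀ → psiA m b x < 0 := by
        intro x hx hxx
        obtain ⟨s, hsS, hxs⟩ := exists_lt_of_lt_csSup ⟨s₀, hs₀⟩ hxx
        exact lt_trans (psiA_strictMono hb hx hxs) hsS.2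
      have hpos : ∀ x : ℝ, x₀ < x → 0 < psiA m b x := by
        intro x hxx
        have hw : x₀ < (x₀ + x) / 2 := by linarith
        have hw2 : (x₀ + x) / 2 < x := by linarith
        have hwpos : 0 < (x₀ + x) / 2 := by linarith
        have hwnotS : ((x₀ + x) / 2) ∉ {x : ℝ | 0 < x ∧ psiA m b x < 0} :=
          fun hmem => absurd (le_csSup hBdd hmem) (not_le.mpr hw)
        have hge : 0 ≤ psiA m b ((x₀ + x) / 2) := by
          by_contra hcon
          exact hwnotS ⟨hwpos, not_le.mp hcon⟩
        exact lt_of_le_of_lt hge (psiA_strictMono hb hwpos hw2)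
      have hanti : StrictAntiOn f (Icc 0 x₀) := by
        apply strictAntiOn_of_deriv_neg (convex_Icc 0 x₀) hcont.continuousOn
        intro x hx
        rw [interior_Icc] at hx
        rw [hderiv x hx.1]
        exact ((sign_iff hm hb hx.1 hlogb).1).mpr (hneg x hx.1 hx.2)
      have hmono2 : StrictMonoOn f (Ici x₀) := by
        apply strictMonoOn_of_deriv_pos (convex_Ici x₀) hcont.continuousOn
        intro x hx
        rw [interior_Ici, mem_Ioi] at hx
        rw [hderiv x (hx₀pos.trans hx)]
        exact ((sign_iff hm hb (hx₀pos.trans hx) hlogb).2).mpr (hpos x hx)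
      have hle : ∀ x : ℝ, x₀ ≤ x → f x ≤ 0 := by
        intro x hx
        apply ge_of_tendsto hlim
        filter_upwards [eventually_ge_atTop x] with u hu
        exact hmono2.monotoneOn (mem_Ici.mpr hx) (mem_Ici.mpr (hx.trans hu)) hu
      rcases le_or_gt z x₀ with hzx | hzx
      · have hlt := hanti (left_mem_Icc.mpr hx₀pos.le) (mem_Icc.mpr ⟨hz.le, hzx⟩) hz
        linarith
      · have h1 : f z < f (z + 1) :=
          hmono2 (mem_Ici.mpr hzx.le) (mem_Ici.mpr (by linarith)) (by linarith)
        have h2 : f (z + 1) ≤ 0 := hle (z + 1) (by linarith)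
        linarith
    · -- S unbounded : psi < 0 everywhere, contradiction
      exfalso
      have hneg : ∀ x : ℝ, 0 < x → psiA m b x < 0 := by
        intro x hx
        obtain ⟨s, hsS, hxs⟩ : ∃ s ∈ {x : ℝ | 0 < x ∧ psiA m b x < 0}, x < s := by
          by_contra hcon
          push_neg at hcon
          exact hBdd ⟨x, fun s hs => hcon s hs⟩
        exact lt_trans (psiA_strictMono hb hx hxs) hsS.2
      have hanti : StrictAntiOn f (Ici 0) := by
        apply strictAntiOn_of_deriv_neg (convex_Ici 0) hcont.continuousOn
        intro x hx
        rw [interior_Ici, mem_Ioi] at hx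
        rw [hderiv x hx]
        exact ((sign_iff hm hb hx hlogb).1).mpr (hneg x hx)
      have h10 : f 1 < f 0 := hanti self_mem_Ici (mem_Ici.mpr zero_le_one) zero_lt_one
      have h1le : 0 ≤ f 1 := by
        apply le_of_tendsto hlim
        filter_upwards [eventually_ge_atTop (1:ℝ)] with u hu
        exact (hanti.antitoneOn (mem_Ici.mpr zero_le_one)
          (mem_Ici.mpr (by linarith)) hu)
      linarith
  · -- S empty : psi ≥ 0 everywhere, contradiction
    exfalso
    have hge : ∀ x : ℝ, 0 < x → 0 ≤ psiA m b x := by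
      intro x hx
      by_contra h
      exact hS ⟨x, hx, not_le.mp h⟩
    have hmono1 : StrictMonoOn f (Ici 1) := by
      apply strictMonoOn_of_deriv_pos (convex_Ici 1) hcont.continuousOn
      intro x hx
      rw [interior_Ici, mem_Ioi] at hx
      have hx0 : (0:ℝ) < x := by linarith
      rw [hderiv x hx0]
      exact ((sign_iff hm hb hx0 hlogb).2).mpr
        (lt_of_le_of_lt (hge 1 one_pos) (psiA_strictMono hb one_pos hx))
    have hmono0 : MonotoneOn f (Icc 0 1) := by
      apply monotoneOn_of_deriv_nonneg (convex_Icc 0 1) hcont.continuousOn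
      · intro x hx
        rw [interior_Icc] at hx
        exact (hfd x hx.1).differentiableAt.differentiableWithinAt
      · intro x hx
        rw [interior_Icc] at hx
        rw [hderiv x hx.1]
        by_contra hcon
        have hE := ((sign_iff hm hb hx.1 hlogb).1).mp (not_le.mp hcon)
        exact absurd hE (not_lt.mpr (hge x hx.1))
    have h01 : f 0 ≤ f 1 := hmono0 ⟨le_rfl, zero_le_one⟩ ⟨zero_le_one, le_rfl⟩ zero_le_one
    have h12 : f 1 < f 2 := hmono1 (mem_Ici.mpr le_rfl) (mem_Ici.mpr one_le_two) one_lt_two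
    have h2le : f 2 ≤ 0 := by
      apply ge_of_tendsto hlim
      filter_upwards [eventually_ge_atTop (2:ℝ)] with u hu
      exact hmono1.monotoneOn (mem_Ici.mpr one_le_two) (mem_Ici.mpr (by linarith)) hu
    linarith
end

section
/- Let I be a nonnegative random variable with Laplace transform L_I, let m = M − n₀ + 1 ≥ 2 be an integer, and s > 0. Then combining the Erlang CCDF with Alzer's inequality, 1 − E[γ(m, sI)]/Γ(m) ≤ Σ_{i=1}^{m} (−1)^{i+1} C(m,i) L_I(i · (Γ(m+1))^{−1/m} · s). -/
open Real Finset

noncomputable def Pm (m : ℕ) (x : ℝ) : ℝ := ∑ k ∈ Finset.range m, x ^ k / k.factorial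

lemma Pm_zero (m : ℕ) (hm : 1 ≤ m) : Pm m 0 = 1 := by
  unfold Pm
  rw [Finset.sum_eq_single 0]
  · simp
  · intro k hk hk0
    simp [zero_pow hk0]
  · intro h; simp at h; omega

lemma Pm_hasDeriv (m : ℕ) (x : ℝ) : HasDerivAt (Pm m) (Pm (m-1) x) x := by
  have h : HasDerivAt (Pm m) (∑ k ∈ Finset.range m, (k : ℝ) * x ^ (k-1) / k.factorial) x := by
    apply HasDerivAt.fun_sum
    intro k _
    simpa using ((hasDerivAt_pow k x).div_const (k.factorial : ℝ))
  convert h using 1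
  rcases Nat.eq_zero_or_pos m with hm | hm
  · simp [hm, Pm]
  · obtain ⟨n, rfl⟩ : ∃ n, m = n + 1 := ⟨m - 1, by omega⟩
    rw [Finset.sum_range_succ']
    simp only [Nat.add_sub_cancel, Nat.cast_zero, zero_mul, zero_div, add_zero, Pm]
    apply Finset.sum_congr rfl
    intro k _
    rw [Nat.factorial_succ]
    push_cast
    have hk : (k : ℝ) + 1 ≠ 0 := by positivity
    have hf : (k.factorial : ℝ) ≠ 0 := by positivity
    field_simp

lemma Em_hasDeriv (m : ℕ) (hm : 1 ≤ m) (x : ℝ) :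
    HasDerivAt (fun y => Real.exp (-y) * Pm m y)
      (-(x ^ (m-1) * Real.exp (-x) / (m-1).factorial)) x := by
  have he : HasDerivAt (fun y : ℝ => Real.exp (-y)) (-Real.exp (-x)) x := by
    simpa using ((hasDerivAt_id x).neg.exp)
  have := he.mul (Pm_hasDeriv m x)
  convert this using 1
  · rfl
  · rfl
  · rfl
  have hsplit : Pm m x = Pm (m-1) x + x ^ (m-1) / (m-1).factorial := by
    unfold Pm
    obtain ⟨n, rfl⟩ : ∃ n, m = n + 1 := ⟨m - 1, by omega⟩
    simp [Finset.sum_range_succ]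
  rw [hsplit]; ring

lemma gamma_int (m : ℕ) (hm : 1 ≤ m) (x : ℝ) :
    ∫ t in (0:ℝ)..x, t ^ ((m : ℝ) - 1) * Real.exp (-t)
      = ((m-1).factorial : ℝ) * (1 - Real.exp (-x) * Pm m x) := by
  have hcast : ((m : ℝ) - 1) = ((m - 1 : ℕ) : ℝ) := by
    have : (m : ℝ) = ((m - 1 : ℕ) : ℝ) + 1 := by
      push_cast [Nat.cast_sub hm]; ring
    rw [this]; ring
  have hint : ∀ t : ℝ, t ^ ((m : ℝ) - 1) * Real.exp (-t)
      = t ^ (m - 1 : ℕ) * Real.exp (-t) := by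
    intro t; rw [hcast, Real.rpow_natCast]
  simp_rw [hint]
  have key : ∀ t ∈ Set.uIcc 0 x,
      HasDerivAt (fun y => ((m-1).factorial : ℝ) * (1 - Real.exp (-y) * Pm m y))
        (t ^ (m - 1 : ℕ) * Real.exp (-t)) t := by
    intro t _
    have := ((Em_hasDeriv m hm t).const_mul ((m-1).factorial : ℝ)).neg.const_add
      ((m-1).factorial : ℝ)
    convert this using 1
    · rfl
    · rfl
    · ext y; simp only [Pi.neg_apply]; ring
    · field_simp
  rw [intervalIntegral.integral_eq_sub_of_hasDerivAt key]
  · simp [Pm_zero m hm]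
  · apply Continuous.intervalIntegrable
    exact (continuous_pow _).mul (Real.continuous_exp.comp continuous_neg)

noncomputable def fA (m : ℕ) (c : ℝ) (x : ℝ) : ℝ :=
  1 - Real.exp (-x) * Pm m x - (1 - Real.exp (-(c*x)))^m

noncomputable def gA (m : ℕ) (c : ℝ) (x : ℝ) : ℝ :=
  (1-c)*x + ((m-1 : ℕ) : ℝ) * (Real.log (1 - Real.exp (-(c*x))) - Real.log c - Real.log x)

noncomputable def hA (c : ℝ) (x : ℝ) : ℝ :=
  c * Real.exp (-(c*x)) / (1 - Real.exp (-(c*x))) - 1/x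

lemma v_pos {c x : ℝ} (hc : 0 < c) (hx : 0 < x) : 0 < 1 - Real.exp (-(c*x)) := by
  have : Real.exp (-(c*x)) < 1 := by
    rw [Real.exp_lt_one_iff]; nlinarith
  linarith

lemma v_le {c x : ℝ} : 1 - Real.exp (-(c*x)) ≤ c * x := by
  nlinarith [Real.add_one_le_exp (-(c*x))]

-- derivative of exp(-(c*x))
lemma u_hasDeriv (c x : ℝ) :
    HasDerivAt (fun y => Real.exp (-(c*y))) (-c * Real.exp (-(c*x))) x := by
  have h1 : HasDerivAt (fun y : ℝ => -(c*y)) (-c) x := by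
    simpa using ((hasDerivAt_id x).const_mul c).fun_neg
  simpa [mul_comm] using h1.exp

lemma hA_hasDeriv {c x : ℝ} (hc : 0 < c) (hx : 0 < x) :
    HasDerivAt (hA c)
      (1/x^2 - c^2 * Real.exp (-(c*x)) / (1 - Real.exp (-(c*x)))^2) x := by
  have hv := v_pos hc hx
  have hvne : (1 - Real.exp (-(c*x))) ≠ 0 := ne_of_gt hv
  have hu := u_hasDeriv c x
  have hvd : HasDerivAt (fun y => 1 - Real.exp (-(c*y))) (c * Real.exp (-(c*x))) x := by
    simpa using (hu.const_sub 1)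
  have hnum : HasDerivAt (fun y => c * Real.exp (-(c*y))) (c * (-c * Real.exp (-(c*x)))) x :=
    hu.const_mul c
  have hq := hnum.div hvd hvne
  have hinv : HasDerivAt (fun y : ℝ => 1/y) (-(1/x^2)) x := by
    simpa [one_div] using (hasDerivAt_inv (ne_of_gt hx))
  have := hq.sub hinv
  convert this using 1
  · rfl
  · rfl
  · rfl
  field_simp
  ring

lemma hA_strictMono {c : ℝ} (hc : 0 < c) : StrictMonoOn (hA c) (Set.Ioi 0) := by
  have key : ∀ x ∈ Set.Ioi (0:ℝ),
      0 < 1/x^2 - c^2 * Real.exp (-(c*x)) / (1 - Real.exp (-(c*x)))^2 := by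
    intro x hx
    simp only [Set.mem_Ioi] at hx
    have hv := v_pos hc hx
    -- key inequality : c*x*exp(-(c*x)/2) < 1 - exp(-(c*x))
    have hsinh : c*x/2 < Real.sinh (c*x/2) := by
      rw [Real.self_lt_sinh_iff]; positivity
    rw [Real.sinh_eq] at hsinh
    have h2 : c * x < Real.exp (c*x/2) - Real.exp (-(c*x/2)) := by linarith
    have e1 : Real.exp (c*x/2) * Real.exp (-(c*x/2)) = 1 := by
      rw [← Real.exp_add]; norm_num
    have e2 : Real.exp (-(c*x/2)) * Real.exp (-(c*x/2)) = Real.exp (-(c*x)) := by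
      rw [← Real.exp_add]; ring_nf
    have h3 : c * x * Real.exp (-(c*x/2)) < 1 - Real.exp (-(c*x)) := by
      have := mul_lt_mul_of_pos_right h2 (Real.exp_pos (-(c*x/2)))
      nlinarith
    have hsq' : c^2 * x^2 * Real.exp (-(c*x)) < (1 - Real.exp (-(c*x)))^2 := by
      have h0 : 0 ≤ c * x * Real.exp (-(c*x/2)) := by positivity
      have e3 : c^2*x^2*Real.exp (-(c*x))
          = (c*x*Real.exp (-(c*x/2))) * (c*x*Real.exp (-(c*x/2))) := by
        rw [← e2]; ring
      rw [e3, sq]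
      exact mul_self_lt_mul_self h0 h3
    rw [sub_pos, div_lt_div_iff₀ (by positivity) (by positivity)]
    nlinarith [Real.exp_pos (-(c*x))]
  exact strictMonoOn_of_deriv_pos (convex_Ioi 0)
    (fun x hx => (hA_hasDeriv hc (by exact hx)).continuousAt.continuousWithinAt)
    (by
      intro x hx
      rw [interior_Ioi] at hx
      rw [(hA_hasDeriv hc hx).deriv]
      exact key x hx)

lemma gA_hasDeriv {m : ℕ} {c x : ℝ} (hc : 0 < c) (hx : 0 < x) :
    HasDerivAt (gA m c) ((1-c) + ((m-1 : ℕ) : ℝ) * hA c x) x := by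
  have hv := v_pos hc hx
  have hvd : HasDerivAt (fun y => 1 - Real.exp (-(c*y))) (c * Real.exp (-(c*x))) x := by
    simpa using ((u_hasDeriv c x).const_sub 1)
  have hlogv : HasDerivAt (fun y => Real.log (1 - Real.exp (-(c*y))))
      (c * Real.exp (-(c*x)) / (1 - Real.exp (-(c*x)))) x := hvd.log (ne_of_gt hv)
  have hlogx : HasDerivAt Real.log x⁻¹ x := Real.hasDerivAt_log (ne_of_gt hx)
  have hlin : HasDerivAt (fun y : ℝ => (1-c)*y) (1-c) x := by
    simpa using (hasDerivAt_id x).const_mul (1-c)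
  have h2 : HasDerivAt (fun y => Real.log (1 - Real.exp (-(c*y))) - Real.log c - Real.log y)
      (c * Real.exp (-(c*x)) / (1 - Real.exp (-(c*x))) - x⁻¹) x := by
    simpa using (hlogv.sub_const (Real.log c)).fun_sub hlogx
  unfold gA hA
  have := hlin.add (h2.const_mul ((m-1 : ℕ) : ℝ))
  convert this using 1
  · rfl
  · rfl
  · rfl
  rw [one_div]

lemma fA_hasDeriv (m : ℕ) (hm : 1 ≤ m) (c : ℝ) (x : ℝ) :
    HasDerivAt (fA m c)
      (x ^ (m-1) * Real.exp (-x) / (m-1).factorial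
        - (m : ℝ) * (1 - Real.exp (-(c*x)))^(m-1) * (c * Real.exp (-(c*x)))) x := by
  have hE := Em_hasDeriv m hm x
  have hvd : HasDerivAt (fun y => 1 - Real.exp (-(c*y))) (c * Real.exp (-(c*x))) x := by
    simpa using ((u_hasDeriv c x).const_sub 1)
  have hB := hvd.pow m
  have := (hE.const_sub 1).sub hB
  unfold fA
  convert this using 1
  · rfl
  · rfl
  · rfl
  push_cast
  ring

lemma fA_cont (m : ℕ) (hm : 1 ≤ m) (c : ℝ) : Continuous (fA m c) :=
  continuous_iff_continuousAt.2 fun x => (fA_hasDeriv m hm c x).continuousAt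

-- the key sign identity: fA' x = A x * (1 - exp (gA x)) for x > 0
lemma fA_deriv_sign (m : ℕ) (hm : 2 ≤ m) {c : ℝ} (hc0 : 0 < c) (hc1 : c < 1)
    (hcm : (m.factorial : ℝ) * c ^ m = 1) {x : ℝ} (hx : 0 < x) :
    x ^ (m-1) * Real.exp (-x) / (m-1).factorial
        - (m : ℝ) * (1 - Real.exp (-(c*x)))^(m-1) * (c * Real.exp (-(c*x)))
      = x ^ (m-1) * Real.exp (-x) / (m-1).factorial * (1 - Real.exp (gA m c x)) := by
  have hv := v_pos hc0 hx
  have hfact : ((m-1).factorial : ℝ) * c ^ (m-1) * ((m:ℝ) * c) = 1 := by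
    obtain ⟨n, rfl⟩ : ∃ n, m = n + 1 := ⟨m - 1, by omega⟩
    rw [Nat.factorial_succ] at hcm
    push_cast at hcm ⊢
    linear_combination hcm
  have hexp : Real.exp (gA m c x)
      = Real.exp ((1-c)*x) * ((1 - Real.exp (-(c*x))) / (c*x))^(m-1) := by
    unfold gA
    rw [Real.exp_add, Real.exp_nat_mul]
    congr 1
    rw [Real.exp_sub, Real.exp_sub, Real.exp_log hv, Real.exp_log hc0, Real.exp_log hx,
      div_div]
  rw [hexp]
  have hche : Real.exp ((1-c)*x) = Real.exp (-(c*x)) / Real.exp (-x) := by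
    rw [← Real.exp_sub]; ring_nf
  have hfne : ((m-1).factorial : ℝ) ≠ 0 := by positivity
  have hexpne : Real.exp (-x) ≠ 0 := Real.exp_ne_zero _
  have hcx : (c*x) ≠ 0 := by positivity
  rw [hche, div_pow, mul_pow, mul_sub, mul_one]
  congr 1
  have hxne : (x:ℝ)^(m-1) ≠ 0 := pow_ne_zero _ (ne_of_gt hx)
  have hcne : (c:ℝ)^(m-1) ≠ 0 := pow_ne_zero _ (ne_of_gt hc0)
  field_simp
  ring_nf
  linear_combination hfact

lemma gA_le {m : ℕ} {c : ℝ} (hc0 : 0 < c) {x : ℝ} (hx : 0 < x) :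
    gA m c x ≤ (1-c)*x := by
  unfold gA
  have hv := v_pos hc0 hx
  have h1 : Real.log (1 - Real.exp (-(c*x))) ≤ Real.log c + Real.log x := by
    rw [← Real.log_mul (ne_of_gt hc0) (ne_of_gt hx)]
    exact Real.log_le_log hv v_le
  nlinarith [Nat.cast_nonneg (α := ℝ) (m-1)]

lemma gA_downward {m : ℕ} (hm : 2 ≤ m) {c : ℝ} (hc0 : 0 < c) (hc1 : c < 1)
    {a b : ℝ} (ha : 0 < a) (hab : a < b) (hgb : gA m c b ≤ 0) : gA m c a ≤ 0 := by
  by_contra hga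
  push_neg at hga
  set G' : ℝ → ℝ := fun y => (1-c) + ((m-1 : ℕ) : ℝ) * hA c y with hG'
  have hmono : StrictMonoOn G' (Set.Ioi 0) := by
    intro u hu v hv huv
    have := hA_strictMono hc0 hu hv huv
    have hm1 : (0:ℝ) < ((m-1 : ℕ) : ℝ) := by
      have : 1 ≤ m - 1 := by omega
      exact_mod_cast Nat.lt_of_lt_of_le Nat.zero_lt_one this
    simp only [hG']
    nlinarith
  set δ : ℝ := min (a/2) (gA m c a / (2*(1-c))) with hδ
  have h1c : 0 < 1 - c := by linarith
  have hδ0 : 0 < δ := by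
    apply lt_min (by linarith) (by positivity)
  have hδa : δ < a := lt_of_le_of_lt (min_le_left _ _) (by linarith)
  have hgδ : gA m c δ < gA m c a := by
    have h2 : gA m c δ ≤ (1-c)*δ := gA_le hc0 hδ0
    have h3 : (1-c)*δ ≤ (1-c)*(gA m c a / (2*(1-c))) :=
      mul_le_mul_of_nonneg_left (min_le_right _ _) (le_of_lt h1c)
    have h4 : (1-c)*(gA m c a / (2*(1-c))) = gA m c a / 2 := by
      field_simp
    linarith
  have hcontg : ∀ u v : ℝ, 0 < u → ContinuousOn (gA m c) (Set.Icc u v) := by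
    intro u v hu
    intro y hy
    exact ((gA_hasDeriv (m := m) hc0 (lt_of_lt_of_le hu hy.1)).continuousAt).continuousWithinAt
  have hd : ∀ u v : ℝ, 0 < u → ∀ y ∈ Set.Ioo u v, HasDerivAt (gA m c) (G' y) y := by
    intro u v hu y hy
    exact gA_hasDeriv hc0 (lt_trans hu hy.1)
  obtain ⟨η, hη, hηval⟩ := exists_hasDerivAt_eq_slope (gA m c) G' hδa
    (hcontg δ a hδ0) (hd δ a hδ0)
  obtain ⟨ξ, hξ, hξval⟩ := exists_hasDerivAt_eq_slope (gA m c) G' hab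
    (hcontg a b ha) (hd a b ha)
  have hηpos : 0 < G' η := by
    rw [hηval]
    apply div_pos (by linarith) (by linarith [hη.1, hη.2])
  have hξneg : G' ξ < 0 := by
    rw [hξval]
    apply div_neg_of_neg_of_pos (by linarith) (by linarith)
  have : G' η < G' ξ := hmono (Set.mem_Ioi.2 (lt_trans hδ0 hη.1))
    (Set.mem_Ioi.2 (lt_trans ha hξ.1)) (lt_trans hη.2 hξ.1)
  linarith

lemma fA_zero (m : ℕ) (hm : 2 ≤ m) (c : ℝ) : fA m c 0 = 0 := by
  unfold fA
  rw [Pm_zero m (by omega)]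
  simp [zero_pow (by omega : m ≠ 0)]

lemma fA_tendsto (m : ℕ) {c : ℝ} (hc0 : 0 < c) :
    Filter.Tendsto (fA m c) Filter.atTop (nhds 0) := by
  have h1 : Filter.Tendsto (fun x => Real.exp (-x) * Pm m x) Filter.atTop (nhds 0) := by
    have heq : ∀ x : ℝ, Real.exp (-x) * Pm m x
        = ∑ k ∈ Finset.range m, (x^k * Real.exp (-x)) / k.factorial := by
      intro x; unfold Pm; rw [Finset.mul_sum]; apply Finset.sum_congr rfl; intro k _; ring
    simp_rw [heq]
    have : (0:ℝ) = ∑ k ∈ Finset.range m, (0:ℝ) / k.factorial := by simp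
    rw [this]
    apply tendsto_finset_sum
    intro k _
    exact (tendsto_pow_mul_exp_neg_atTop_nhds_zero k).div_const _
  have h2 : Filter.Tendsto (fun x => (1 - Real.exp (-(c*x)))^m) Filter.atTop (nhds 1) := by
    have hcx : Filter.Tendsto (fun x : ℝ => -(c*x)) Filter.atTop Filter.atBot := by
      apply Filter.tendsto_neg_atTop_atBot.comp
      exact Filter.Tendsto.const_mul_atTop hc0 Filter.tendsto_id
    have := (Real.tendsto_exp_atBot.comp hcx)
    have h3 : Filter.Tendsto (fun x => 1 - Real.exp (-(c*x))) Filter.atTop (nhds 1) := by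
      simpa using ((tendsto_const_nhds (x := (1:ℝ))).sub this)
    simpa using h3.pow m
  have := ((tendsto_const_nhds (x := (1:ℝ))).sub h1).sub h2
  unfold fA
  simpa using this

lemma fA_nonneg (m : ℕ) (hm : 2 ≤ m) {c : ℝ} (hc0 : 0 < c) (hc1 : c < 1)
    (hcm : (m.factorial : ℝ) * c ^ m = 1) {x : ℝ} (hx : 0 ≤ x) : 0 ≤ fA m c x := by
  rcases eq_or_lt_of_le hx with rfl | hx0
  · rw [fA_zero m hm c]
  by_cases hcase : ∃ a, 0 < a ∧ a ≤ x ∧ 0 < gA m c a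
  · -- decreasing beyond x, tends to 0
    obtain ⟨a, ha0, hax, hga⟩ := hcase
    have hgy : ∀ y, x ≤ y → 0 < gA m c y := by
      intro y hy
      rcases eq_or_lt_of_le (le_trans hax hy) with rfl | hay
      · exact hga
      by_contra hgyn
      push_neg at hgyn
      exact absurd (gA_downward hm hc0 hc1 ha0 hay hgyn) (not_le.2 hga)
    have hanti : AntitoneOn (fA m c) (Set.Ici x) := by
      apply antitoneOn_of_deriv_nonpos (convex_Ici x)
        ((fA_cont m (by omega) c).continuousOn)
      · intro y hy
        exact ((fA_hasDeriv m (by omega) c y).differentiableAt).differentiableWithinAt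
      · intro y hy
        rw [interior_Ici] at hy
        have hyx : x < y := hy
        have hy0 : 0 < y := lt_trans hx0 hyx
        rw [(fA_hasDeriv m (by omega) c y).deriv, fA_deriv_sign m hm hc0 hc1 hcm hy0]
        have hgy' := hgy y (le_of_lt hyx)
        have : (1:ℝ) < Real.exp (gA m c y) := by
          rw [Real.one_lt_exp_iff]; exact hgy'
        have hA0 : 0 ≤ y ^ (m-1) * Real.exp (-y) / (m-1).factorial := by positivity
        nlinarith
    apply le_of_tendsto (fA_tendsto m hc0)
    filter_upwards [Filter.eventually_ge_atTop x] with y hy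
    exact hanti (Set.mem_Ici.2 le_rfl) (Set.mem_Ici.2 hy) hy
  · -- increasing on [0,x]
    push_neg at hcase
    have hmono : MonotoneOn (fA m c) (Set.Icc 0 x) := by
      apply monotoneOn_of_deriv_nonneg (convex_Icc 0 x)
        ((fA_cont m (by omega) c).continuousOn)
      · intro y hy
        exact ((fA_hasDeriv m (by omega) c y).differentiableAt).differentiableWithinAt
      · intro y hy
        rw [interior_Icc] at hy
        have hy0 : 0 < y := hy.1
        rw [(fA_hasDeriv m (by omega) c y).deriv, fA_deriv_sign m hm hc0 hc1 hcm hy0]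
        have hgy := hcase y hy0 (le_of_lt hy.2)
        have : Real.exp (gA m c y) ≤ 1 := Real.exp_le_one_iff.2 hgy
        have hA0 : 0 ≤ y ^ (m-1) * Real.exp (-y) / (m-1).factorial := by positivity
        nlinarith
    have := hmono (Set.mem_Icc.2 ⟨le_rfl, hx⟩) (Set.mem_Icc.2 ⟨hx, le_rfl⟩) hx
    rwa [fA_zero m hm c] at this

lemma alzer (m : ℕ) (hm : 2 ≤ m) {c : ℝ} (hc0 : 0 < c) (hc1 : c < 1)
    (hcm : (m.factorial : ℝ) * c ^ m = 1) {x : ℝ} (hx : 0 ≤ x) :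
    (1 - Real.exp (-(c*x)))^m ≤ 1 - Real.exp (-x) * Pm m x := by
  have := fA_nonneg m hm hc0 hc1 hcm hx
  unfold fA at this
  linarith

lemma Pm_cont (m : ℕ) : Continuous (Pm m) := by
  unfold Pm
  exact continuous_finset_sum _ (fun k _ => (continuous_pow k).div_const _)

lemma Pm_nonneg (m : ℕ) {x : ℝ} (hx : 0 ≤ x) : 0 ≤ Pm m x := by
  unfold Pm
  apply Finset.sum_nonneg
  intro k _
  positivity

lemma F_mem (m : ℕ) {x : ℝ} (hx : 0 ≤ x) :
    0 ≤ 1 - Real.exp (-x) * Pm m x ∧ 1 - Real.exp (-x) * Pm m x ≤ 1 := by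
  constructor
  · have h1 : Pm m x ≤ Real.exp x := Real.sum_le_exp_of_nonneg hx m
    have h2 : Real.exp (-x) * Pm m x ≤ Real.exp (-x) * Real.exp x :=
      mul_le_mul_of_nonneg_left h1 (le_of_lt (Real.exp_pos _))
    rw [← Real.exp_add] at h2
    simp at h2
    linarith
  · have := mul_nonneg (le_of_lt (Real.exp_pos (-x))) (Pm_nonneg m hx)
    linarith

lemma binom_id (m : ℕ) (hm : 1 ≤ m) (y : ℝ) :
    1 - (1 - Real.exp (-y))^m
      = ∑ i ∈ Finset.Icc 1 m, (-1:ℝ)^(i+1) * (m.choose i : ℝ) * Real.exp (-((i:ℝ)*y)) := by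
  have hexp : ∀ i : ℕ, Real.exp (-((i:ℝ)*y)) = (Real.exp (-y))^i := by
    intro i
    rw [← Real.exp_nat_mul]
    ring_nf
  simp_rw [hexp]
  set u : ℝ := Real.exp (-y) with hu
  have hpow : (1 - u)^m = ∑ i ∈ Finset.range (m+1), (-1:ℝ)^i * (m.choose i : ℝ) * u^i := by
    have := add_pow (-u) 1 m
    simp only [one_pow, mul_one] at this
    rw [show (1:ℝ) - u = -u + 1 by ring, this]
    apply Finset.sum_congr rfl
    intro i _
    rw [neg_pow]
    ring
  have hsplit : Finset.range (m+1) = insert 0 (Finset.Icc 1 m) := by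
    ext i
    simp only [Finset.mem_range, Finset.mem_insert, Finset.mem_Icc]
    omega
  rw [hpow, hsplit, Finset.sum_insert (by simp)]
  simp only [pow_zero, Nat.choose_zero_right, Nat.cast_one, one_mul, mul_one]
  have hneg : ∑ i ∈ Finset.Icc 1 m, (-1:ℝ)^(i+1) * (m.choose i : ℝ) * u^i
      = -∑ i ∈ Finset.Icc 1 m, (-1:ℝ)^i * (m.choose i : ℝ) * u^i := by
    rw [← Finset.sum_neg_distrib]
    apply Finset.sum_congr rfl
    intro i _
    rw [pow_succ]
    ring
  rw [hneg]
  ring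



open MeasureTheory Real

/-- Combining the Erlang CCDF with Alzer's inequality: for a nonnegative random
variable `I`, integer `m = M − n₀ + 1 ≥ 2` and `s > 0`,
`1 − E[γ(m,sI)]/Γ(m) ≤ Σ_{i=1}^{m} (−1)^{i+1} C(m,i) L_I(i Γ(m+1)^{−1/m} s)`. -/
theorem upper_bound_success_probability
    {Ω : Type*} [MeasurableSpace Ω] (μ : Measure Ω) [IsProbabilityMeasure μ]
    (I : Ω → ℝ) (hIm : Measurable I) (hI0 : ∀ᵐ ω ∂μ, 0 ≤ I ω)
    (hIpos : 0 < μ {ω | 0 < I ω})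
    (M n₀ : ℕ) (m : ℕ) (hmdef : m = M - n₀ + 1) (hm2 : 2 ≤ m)
    (s : ℝ) (hs : 0 < s) :
    1 - (∫ ω, (∫ t in (0:ℝ)..(s * I ω), t ^ ((m : ℝ) - 1) * Real.exp (-t)) ∂μ)
          / Real.Gamma m ≤
      ∑ i ∈ Finset.Icc 1 m, (-1 : ℝ) ^ (i + 1) * (m.choose i : ℝ) *
        ∫ ω, Real.exp
          (-((i : ℝ) * Real.Gamma ((m : ℝ) + 1) ^ (-(1 / (m : ℝ))) * s * I ω)) ∂μ := by
  have hm1 : 1 ≤ m := by omega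
  set c : ℝ := Real.Gamma ((m : ℝ) + 1) ^ (-(1 / (m : ℝ))) with hc
  have hGamma1 : Real.Gamma ((m : ℝ) + 1) = (m.factorial : ℝ) :=
    Real.Gamma_nat_eq_factorial m
  have hfac1 : (1:ℝ) < (m.factorial : ℝ) := by
    have : 2 ≤ m.factorial := by
      calc 2 = Nat.factorial 2 := rfl
      _ ≤ m.factorial := Nat.factorial_le hm2
    exact_mod_cast Nat.lt_of_lt_of_le Nat.one_lt_two this
  have hfacpos : (0:ℝ) < (m.factorial : ℝ) := by linarith
  have hmne : (m:ℝ) ≠ 0 := by positivity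
  have hc0 : 0 < c := by
    rw [hc, hGamma1]
    exact Real.rpow_pos_of_pos hfacpos _
  have hc1 : c < 1 := by
    rw [hc, hGamma1]
    apply Real.rpow_lt_one_of_one_lt_of_neg hfac1
    simp only [neg_neg, Left.neg_neg_iff]
    positivity
  have hcm : (m.factorial : ℝ) * c ^ m = 1 := by
    rw [hc, hGamma1, ← Real.rpow_natCast ((m.factorial:ℝ) ^ (-(1/(m:ℝ)))) m,
      ← Real.rpow_mul (le_of_lt hfacpos)]
    rw [show -(1/(m:ℝ)) * (m:ℕ) = -1 by field_simp]
    rw [Real.rpow_neg_one]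
    field_simp
  have hGm : Real.Gamma (m : ℝ) = ((m-1).factorial : ℝ) := by
    rw [show ((m : ℕ) : ℝ) = ((m - 1 : ℕ) : ℝ) + 1 by
      push_cast [Nat.cast_sub hm1]; ring]
    exact Real.Gamma_nat_eq_factorial (m-1)
  have hfm1pos : (0:ℝ) < ((m-1).factorial : ℝ) := by positivity
  -- abbreviations
  set F : Ω → ℝ := fun ω => 1 - Real.exp (-(s * I ω)) * Pm m (s * I ω) with hF
  set B : Ω → ℝ := fun ω => (1 - Real.exp (-(c * (s * I ω))))^m with hB
  -- rewrite LHS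
  have hLHS : (∫ ω, (∫ t in (0:ℝ)..(s * I ω), t ^ ((m : ℝ) - 1) * Real.exp (-t)) ∂μ)
      / Real.Gamma m = ∫ ω, F ω ∂μ := by
    have : ∀ ω, (∫ t in (0:ℝ)..(s * I ω), t ^ ((m : ℝ) - 1) * Real.exp (-t))
        = ((m-1).factorial : ℝ) * F ω := fun ω => gamma_int m hm1 (s * I ω)
    simp_rw [this, integral_const_mul, hGm]
    field_simp
  rw [hLHS]
  -- integrability
  have hFmeas : AEStronglyMeasurable F μ := by
    have hg : Continuous (fun y : ℝ => 1 - Real.exp (-y) * Pm m y) :=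
      continuous_const.sub ((Real.continuous_exp.comp continuous_neg).mul (Pm_cont m))
    exact (hg.measurable.comp (measurable_const.mul hIm)).aestronglyMeasurable
  have hBmeas : AEStronglyMeasurable B μ := by
    have hg : Continuous (fun y : ℝ => (1 - Real.exp (-(c * y)))^m) := by fun_prop
    exact (hg.measurable.comp (measurable_const.mul hIm)).aestronglyMeasurable
  have hsI : ∀ᵐ ω ∂μ, 0 ≤ s * I ω := by
    filter_upwards [hI0] with ω h0
    positivity
  have hFint : Integrable F μ := by
    apply Integrable.mono' (integrable_const (1:ℝ)) hFmeas
    filter_upwards [hsI] with ω h0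
    have := F_mem m h0
    rw [Real.norm_eq_abs, abs_le]
    simp only [hF]
    constructor <;> [linarith [this.1]; linarith [this.2]]
  have hBint : Integrable B μ := by
    apply Integrable.mono' (integrable_const (1:ℝ)) hBmeas
    filter_upwards [hsI] with ω h0
    have hv0 : 0 ≤ 1 - Real.exp (-(c * (s * I ω))) := by
      rcases eq_or_lt_of_le h0 with heq | hlt
      · simp [← heq]
      · exact le_of_lt (v_pos hc0 hlt)
    have hv1 : 1 - Real.exp (-(c * (s * I ω))) ≤ 1 := by
      have := Real.exp_pos (-(c * (s * I ω))); linarith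
    rw [Real.norm_eq_abs, abs_le]
    constructor
    · have : (0:ℝ) ≤ (1 - Real.exp (-(c * (s * I ω))))^m := pow_nonneg hv0 m
      simp only [hB]; linarith
    · simp only [hB]; exact pow_le_one₀ hv0 hv1
  -- Alzer a.e.
  have hstep : ∫ ω, B ω ∂μ ≤ ∫ ω, F ω ∂μ := by
    apply integral_mono_ae hBint hFint
    filter_upwards [hsI] with ω h0
    exact alzer m hm2 hc0 hc1 hcm h0
  have hone : (1:ℝ) - ∫ ω, B ω ∂μ = ∫ ω, (1 - B ω) ∂μ := by
    rw [integral_sub (integrable_const 1) hBint]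
    simp
  -- RHS identity
  have hRHS : ∫ ω, (1 - B ω) ∂μ
      = ∑ i ∈ Finset.Icc 1 m, (-1 : ℝ) ^ (i + 1) * (m.choose i : ℝ) *
        ∫ ω, Real.exp (-((i : ℝ) * c * s * I ω)) ∂μ := by
    have hpt : ∀ ω, 1 - B ω = ∑ i ∈ Finset.Icc 1 m,
        (-1:ℝ)^(i+1) * (m.choose i : ℝ) * Real.exp (-((i:ℝ) * c * s * I ω)) := by
      intro ω
      have := binom_id m hm1 (c * (s * I ω))
      simp only [hB]
      rw [this]
      apply Finset.sum_congr rfl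
      intro i _
      congr 2
      ring
    simp_rw [hpt]
    rw [integral_finset_sum]
    · apply Finset.sum_congr rfl
      intro i _
      rw [integral_const_mul]
    · intro i hi
      apply Integrable.const_mul
      apply Integrable.mono' (integrable_const (1:ℝ))
      · have hg : Continuous (fun y : ℝ => Real.exp (-((i:ℝ) * c * s * y))) := by fun_prop
        exact (hg.measurable.comp hIm).aestronglyMeasurable
      · filter_upwards [hI0] with ω h0
        rw [Real.norm_eq_abs, Real.abs_exp, Real.exp_le_one_iff]
        simp only [Left.neg_nonpos_iff]
        positivity
  calc 1 - ∫ ω, F ω ∂μ ≤ 1 - ∫ ω, B ω ∂μ := by linarith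
    _ = ∫ ω, (1 - B ω) ∂μ := hone
    _ = _ := by rw [hRHS]
end
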